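/- Let a₁ ≥ a₂, b₁ ≥ b₂, c₁ ≥ c₂ be real numbers with a₁ + a₂ + b₁ + b₂ = c₁ + c₂, a₁ + b₁ ≥ c₁, a₂ + b₁ ≥ c₂, and a₁ + b₂ ≥ c₂. Then there exist 2×2 complex Hermitian matrices A and B such that the eigenvalues of A are a₁, a₂, the eigenvalues of B are b₁, b₂, and the eigenvalues of A + B are c₁, c₂. (For 2×2 Hermitian matrices with the trace condition Tr A + Tr B = Tr C, Weyl's inequalities are also sufficient for solving Weyl's problem.) -/

import Mathlib

open Matrix Real

noncomputable def rotC (c s : ℝ) : Matrix (Fin 2) (Fin 2) ℂ :=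
  !![(c : ℂ), -(s : ℂ); (s : ℂ), (c : ℂ)]

lemma rotC_mem (c s : ℝ) (h : c ^ 2 + s ^ 2 = 1) :
    rotC c s ∈ Matrix.unitaryGroup (Fin 2) ℂ := by
  rw [Matrix.mem_unitaryGroup_iff]
  ext i j
  fin_cases i <;> fin_cases j <;>
    · simp [rotC, Matrix.mul_apply, Fin.sum_univ_two, Matrix.one_apply,
        Matrix.conjTranspose_apply]
      norm_cast
      nlinarith [h]

lemma rotC_conj (c s x y : ℝ) :
    rotC c s * Matrix.diagonal ![(x : ℂ), (y : ℂ)] * star (rotC c s) =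
      !![((x * c ^ 2 + y * s ^ 2 : ℝ) : ℂ), (((x - y) * c * s : ℝ) : ℂ);
         (((x - y) * c * s : ℝ) : ℂ), ((x * s ^ 2 + y * c ^ 2 : ℝ) : ℂ)] := by
  ext i j
  fin_cases i <;> fin_cases j <;>
    · simp [rotC, Matrix.mul_apply, Fin.sum_univ_two, Matrix.diagonal_apply,
        Matrix.vecMul_diagonal, Matrix.vecMul, dotProduct,
        Matrix.conjTranspose_apply]
      push_cast
      ring

set_option maxHeartbeats 1000000 in
lemma weyl_aux
    (a₁ a₂ b₁ b₂ c₁ c₂ : ℝ)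
    (ha : a₂ ≤ a₁) (hb : b₂ ≤ b₁) (hc : c₂ ≤ c₁)
    (htrace : a₁ + a₂ + b₁ + b₂ = c₁ + c₂)
    (hw1 : a₁ + b₁ ≥ c₁) (hw2 : a₂ + b₁ ≥ c₂) (hw3 : a₁ + b₂ ≥ c₂) :
    ∃ co sV cφ sφ : ℝ, co ^ 2 + sV ^ 2 = 1 ∧ cφ ^ 2 + sφ ^ 2 = 1 ∧
      c₁ * cφ ^ 2 + c₂ * sφ ^ 2 = a₁ + (b₁ * co ^ 2 + b₂ * sV ^ 2) ∧
      (c₁ - c₂) * (cφ * sφ) = (b₁ - b₂) * (co * sV) ∧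
      c₁ * sφ ^ 2 + c₂ * cφ ^ 2 = a₂ + (b₁ * sV ^ 2 + b₂ * co ^ 2) := by
  -- choose the mixing parameter t
  have hd0 : (0:ℝ) ≤ (a₁ - a₂) * (b₁ - b₂) := mul_nonneg (by linarith) (by linarith)
  have hf0 : (a₁ + b₁) * (a₂ + b₂) ≤ c₁ * c₂ := by
    have hx : a₂ + b₂ = c₁ + c₂ - (a₁ + b₁) := by linarith
    rw [hx]
    nlinarith [mul_nonneg (by linarith : (0:ℝ) ≤ a₁ + b₁ - c₁)
      (by linarith : (0:ℝ) ≤ a₁ + b₁ - c₂)]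
  have hf1 : c₁ * c₂ ≤ (a₁ + b₂) * (a₂ + b₁) := by
    have hx : a₂ + b₁ = c₁ + c₂ - (a₁ + b₂) := by linarith
    rw [hx]
    nlinarith [mul_nonneg (by linarith : (0:ℝ) ≤ c₁ - (a₁ + b₂))
      (by linarith : (0:ℝ) ≤ a₁ + b₂ - c₂)]
  have hf1' : (a₁ + b₂) * (a₂ + b₁)
      = (a₁ + b₁) * (a₂ + b₂) + (a₁ - a₂) * (b₁ - b₂) := by ring
  obtain ⟨t, ht0, ht1, hkey⟩ : ∃ t : ℝ, 0 ≤ t ∧ t ≤ 1 ∧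
      (a₁ + b₁) * (a₂ + b₂) + (a₁ - a₂) * (b₁ - b₂) * t = c₁ * c₂ := by
    by_cases h : (a₁ - a₂) * (b₁ - b₂) = 0
    · exact ⟨0, le_refl 0, zero_le_one, by rw [h]; linarith⟩
    · have hdp : 0 < (a₁ - a₂) * (b₁ - b₂) := lt_of_le_of_ne hd0 (Ne.symm h)
      refine ⟨(c₁ * c₂ - (a₁ + b₁) * (a₂ + b₂)) / ((a₁ - a₂) * (b₁ - b₂)),
        div_nonneg (by linarith) hd0, ?_, ?_⟩
      · rw [div_le_one hdp]; linarith
      · rw [mul_div_cancel₀ _ h]; ring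
  -- the rotation parameters for B
  obtain ⟨co, sV, hco0, hsV0, hco, hsV⟩ : ∃ co sV : ℝ, 0 ≤ co ∧ 0 ≤ sV ∧
      co ^ 2 = 1 - t ∧ sV ^ 2 = t :=
    ⟨Real.sqrt (1 - t), Real.sqrt t, Real.sqrt_nonneg _, Real.sqrt_nonneg _,
      Real.sq_sqrt (by linarith), Real.sq_sqrt ht0⟩
  have hVu : co ^ 2 + sV ^ 2 = 1 := by rw [hsV, hco]; ring
  -- entries of A + B
  obtain ⟨p, hp⟩ : ∃ p : ℝ, p = a₁ + (b₁ * co ^ 2 + b₂ * sV ^ 2) := ⟨_, rfl⟩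
  obtain ⟨r, hr⟩ : ∃ r : ℝ, r = a₂ + (b₁ * sV ^ 2 + b₂ * co ^ 2) := ⟨_, rfl⟩
  obtain ⟨q, hq⟩ : ∃ q : ℝ, q = (b₁ - b₂) * (co * sV) := ⟨_, rfl⟩
  have hq0 : 0 ≤ q := by rw [hq]; exact mul_nonneg (by linarith) (mul_nonneg hco0 hsV0)
  have hq2 : q ^ 2 = (b₁ - b₂) ^ 2 * (t * (1 - t)) := by
    have h' : q ^ 2 = (b₁ - b₂) ^ 2 * (co ^ 2 * sV ^ 2) := by rw [hq]; ring
    rw [h', hco, hsV]; ring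
  have hp' : p = a₁ + (b₁ * (1 - t) + b₂ * t) := by rw [hp, hco, hsV]
  have hr' : r = a₂ + (b₁ * t + b₂ * (1 - t)) := by rw [hr, hco, hsV]
  have hpr : p + r = c₁ + c₂ := by rw [hp', hr']; linarith
  have hdet : p * r - q ^ 2 = c₁ * c₂ := by
    rw [hp', hr', hq2]; linear_combination hkey
  have hple : (p - c₁) * (p - c₂) = -(q ^ 2) := by linear_combination p * hpr - hdet
  have hpc1 : p ≤ c₁ := by
    by_contra hcon
    push_neg at hcon
    have hpos : 0 < (p - c₁) * (p - c₂) :=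
      mul_pos (by linarith) (by linarith)
    linarith [sq_nonneg q, hple]
  have hpc2 : c₂ ≤ p := by
    by_contra hcon
    push_neg at hcon
    have hpos : 0 < (p - c₁) * (p - c₂) :=
      mul_pos_of_neg_of_neg (by linarith) (by linarith)
    linarith [sq_nonneg q, hple]
  -- the diagonalizing rotation for A + B
  obtain ⟨cφ, sφ, hWu, e1, e2, e3⟩ :
      ∃ cφ sφ : ℝ, cφ ^ 2 + sφ ^ 2 = 1 ∧ c₁ * cφ ^ 2 + c₂ * sφ ^ 2 = p ∧
        (c₁ - c₂) * (cφ * sφ) = q ∧ c₁ * sφ ^ 2 + c₂ * cφ ^ 2 = r := by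
    by_cases hdc : c₁ = c₂
    · rw [← hdc] at hple
      have h1 : (p - c₁) ^ 2 + q ^ 2 = 0 := by nlinarith [hple]
      have h2 : (p - c₁) ^ 2 = 0 := by linarith [sq_nonneg (p - c₁), sq_nonneg q]
      have h3 : q ^ 2 = 0 := by linarith [sq_nonneg (p - c₁), sq_nonneg q]
      have hp1 : p = c₁ := by
        have := pow_eq_zero_iff (n := 2) (by norm_num) |>.mp h2
        linarith
      have hq' : q = 0 := pow_eq_zero_iff (n := 2) (by norm_num) |>.mp h3
      exact ⟨1, 0, by norm_num, by rw [hp1]; ring, by rw [hq']; ring,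
        by rw [show r = c₂ by linarith]; ring⟩
    · have dpos : 0 < c₁ - c₂ := lt_of_le_of_ne (by linarith) (by intro h; exact hdc (by linarith))
      have hne : c₁ - c₂ ≠ 0 := ne_of_gt dpos
      refine ⟨Real.sqrt ((p - c₂) / (c₁ - c₂)), Real.sqrt ((c₁ - p) / (c₁ - c₂)),
        ?_, ?_, ?_, ?_⟩
      · rw [Real.sq_sqrt (div_nonneg (by linarith) (by linarith)),
          Real.sq_sqrt (div_nonneg (by linarith) (by linarith)),
          ← add_div, div_eq_one_iff_eq hne]
        ring
      · rw [Real.sq_sqrt (div_nonneg (by linarith) (by linarith)),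
          Real.sq_sqrt (div_nonneg (by linarith) (by linarith)),
          mul_div_assoc', mul_div_assoc', ← add_div, div_eq_iff hne]
        ring
      · rw [← Real.sqrt_mul (div_nonneg (by linarith) (by linarith)),
          show (p - c₂) / (c₁ - c₂) * ((c₁ - p) / (c₁ - c₂)) = (q / (c₁ - c₂)) ^ 2 by
            rw [div_mul_div_comm, div_pow, div_eq_div_iff (by nlinarith) (by positivity)]
            linear_combination (-(c₁ - c₂) * (c₁ - c₂)) * hple,
          Real.sqrt_sq (div_nonneg hq0 (le_of_lt dpos)),
          mul_comm, div_mul_cancel₀ _ hne]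
      · rw [Real.sq_sqrt (div_nonneg (by linarith) (by linarith)),
          Real.sq_sqrt (div_nonneg (by linarith) (by linarith)),
          mul_div_assoc', mul_div_assoc', ← add_div, div_eq_iff hne]
        linear_combination (-(c₁ - c₂)) * hpr
  exact ⟨co, sV, cφ, sφ, hVu, hWu, by rw [e1, hp], by rw [e2, hq], by rw [e3, hr]⟩

lemma herm_aux (x y z : ℝ) :
    (!![(x : ℂ), (y : ℂ); (y : ℂ), (z : ℂ)]).IsHermitian := by
  ext i j
  fin_cases i <;> fin_cases j <;>
    simp [Matrix.conjTranspose_apply, Complex.conj_ofReal]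

lemma herm_diag (x y : ℝ) : (Matrix.diagonal ![(x : ℂ), (y : ℂ)]).IsHermitian := by
  ext i j
  fin_cases i <;> fin_cases j <;>
    simp [Matrix.conjTranspose_apply, Matrix.diagonal_apply, Complex.conj_ofReal]



/-- **Sufficiency of Weyl's inequalities for 2×2 Hermitian matrices.**
If `a₁ ≥ a₂`, `b₁ ≥ b₂`, `c₁ ≥ c₂` satisfy the trace condition
`a₁ + a₂ + b₁ + b₂ = c₁ + c₂` and Weyl's inequalities `a₁ + b₁ ≥ c₁`,
`a₂ + b₁ ≥ c₂`, `a₁ + b₂ ≥ c₂`, then there exist 2×2 Hermitian matrices `A`, `B`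
whose eigenvalues are `a₁, a₂`, resp. `b₁, b₂`, such that `A + B` has
eigenvalues `c₁, c₂`. -/
theorem weyl_problem_two_by_two_sufficient
    (a₁ a₂ b₁ b₂ c₁ c₂ : ℝ)
    (ha : a₂ ≤ a₁) (hb : b₂ ≤ b₁) (hc : c₂ ≤ c₁)
    (htrace : a₁ + a₂ + b₁ + b₂ = c₁ + c₂)
    (hw1 : a₁ + b₁ ≥ c₁) (hw2 : a₂ + b₁ ≥ c₂) (hw3 : a₁ + b₂ ≥ c₂) :
    ∃ (A B : Matrix (Fin 2) (Fin 2) ℂ)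
      (U V W : Matrix (Fin 2) (Fin 2) ℂ),
      A.IsHermitian ∧ B.IsHermitian ∧
      U ∈ Matrix.unitaryGroup (Fin 2) ℂ ∧
      V ∈ Matrix.unitaryGroup (Fin 2) ℂ ∧
      W ∈ Matrix.unitaryGroup (Fin 2) ℂ ∧
      A = U * Matrix.diagonal ![(a₁ : ℂ), (a₂ : ℂ)] * star U ∧
      B = V * Matrix.diagonal ![(b₁ : ℂ), (b₂ : ℂ)] * star V ∧
      A + B = W * Matrix.diagonal ![(c₁ : ℂ), (c₂ : ℂ)] * star W := by
  obtain ⟨co, sV, cφ, sφ, hVu, hWu, e1, e2, e3⟩ :=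
    weyl_aux a₁ a₂ b₁ b₂ c₁ c₂ ha hb hc htrace hw1 hw2 hw3
  refine ⟨Matrix.diagonal ![(a₁ : ℂ), (a₂ : ℂ)],
    rotC co sV * Matrix.diagonal ![(b₁ : ℂ), (b₂ : ℂ)] * star (rotC co sV),
    1, rotC co sV, rotC cφ sφ,
    herm_diag a₁ a₂, ?_, ?_, rotC_mem _ _ hVu, rotC_mem _ _ hWu, by simp, rfl, ?_⟩
  · rw [rotC_conj]
    exact herm_aux _ _ _
  · exact one_mem _
  · rw [rotC_conj, rotC_conj]
    ext i j
    fin_cases i <;> fin_cases j <;>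
      simp [Matrix.diagonal_apply]
    · norm_cast
      linear_combination -e1
    · norm_cast
      linear_combination -e2
    · norm_cast
      linear_combination -e2
    · norm_cast
      linear_combination -e3
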